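/- The functional a ↦ ∫_{D_q} a is a faithful state: ∫_{D_q} 1 = 1; if a is a positive bounded operator then ∫_{D_q} a ≥ 0, and if in addition ∫_{D_q} a = 0 then a = 0. Moreover, if b is scalable with witness J(b) (b∘j = j∘J(b)) then ∫_{D_q}(ab) = ∫_{D_q}(J(b)·a) for every bounded operator a, and if a is scalable then ∫_{D_q} J(a) = ∫_{D_q} a. -/

import Mathlib

open MeasureTheory InnerProductSpace

noncomputable section

/-- `H = ℓ²(ℕ, ℂ)`. -/
abbrev H : Type := lp (fun _ : ℕ => ℂ) 2

/-- The standard orthonormal basis `e n` of `ℓ²(ℕ, ℂ)`. -/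
noncomputable def e (n : ℕ) : H := lp.single 2 n 1

lemma coord (x : H) (m : ℕ) : (inner ℂ (e m) x : ℂ) = x m := by
  rw [e, lp.inner_single_left]
  simp [RCLike.inner_apply]

lemma inner_e (m n : ℕ) : (inner ℂ (e m) (e n) : ℂ) = if m = n then 1 else 0 := by
  rw [coord, e, lp.single_apply]
  simp [eq_comm, Pi.single_apply]

lemma single_eq_smul (m : ℕ) (c : ℂ) : (lp.single 2 m c : H) = c • e m := by
  rw [e, ← lp.single_smul]
  simp

lemma hasSum_exp (c : H →L[ℂ] H) (y : H) (k : ℕ) :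
    HasSum (fun m : ℕ => (y m : ℂ) * (inner ℂ (e k) (c (e m)) : ℂ)) (inner ℂ (e k) (c y)) := by
  have h1 : HasSum (fun m : ℕ => lp.single 2 m (y m)) y := lp.hasSum_single (by norm_num) y
  have h2 : HasSum (fun m : ℕ => (y m : ℂ) • c (e m)) (c y) := by
    have := h1.mapL c
    simpa [single_eq_smul, _root_.map_smul] using this
  have h3 := h2.mapL (innerSL ℂ (e k))
  simpa [innerSL_apply_apply, inner_smul_right] using h3

lemma inner_eq_tsum (c : H →L[ℂ] H) (y : H) (k : ℕ) :
    (inner ℂ (e k) (c y) : ℂ) = ∑' m : ℕ, (y m : ℂ) * (inner ℂ (e k) (c (e m)) : ℂ) :=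
  (hasSum_exp c y k).tsum_eq.symm

lemma diag_apply (q : ℝ) (j : H →L[ℂ] H)
    (hj : ∀ n : ℕ, j (e n) = ((q : ℂ) ^ n) • e n) (y : H) (m : ℕ) :
    (inner ℂ (e m) (j y) : ℂ) = (q : ℂ) ^ m * y m := by
  rw [inner_eq_tsum]
  rw [tsum_eq_single m]
  · rw [hj, inner_smul_right, inner_e]; simp [mul_comm]
  · intro n hn
    rw [hj, inner_smul_right, inner_e]
    simp [hn.symm]

lemma entry_rel (q : ℝ) (j : H →L[ℂ] H)
    (hj : ∀ n : ℕ, j (e n) = ((q : ℂ) ^ n) • e n) (b Jb : H →L[ℂ] H)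
    (hb : b.comp j = j.comp Jb) (m k : ℕ) :
    (q : ℂ) ^ k * (inner ℂ (e m) (b (e k)) : ℂ) = (q : ℂ) ^ m * (inner ℂ (e m) (Jb (e k)) : ℂ) := by
  have h := congrArg (fun f : H →L[ℂ] H => f (e k)) hb
  simp only [ContinuousLinearMap.comp_apply, hj] at h
  rw [_root_.map_smul] at h
  have h2 := congrArg (fun z : H => (inner ℂ (e m) z : ℂ)) h
  simp only [inner_smul_right] at h2
  rw [diag_apply q j hj (Jb (e k)) m, ← coord (Jb (e k)) m] at h2
  exact h2

lemma norm_e (k : ℕ) : ‖e k‖ = 1 := by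
  have h : (inner ℂ (e k) (e k) : ℂ) = 1 := by rw [inner_e]; simp
  have := @inner_self_eq_norm_sq ℂ H _ _ _ (e k)
  rw [h] at this
  simp only [RCLike.one_re] at this
  nlinarith [norm_nonneg (e k)]

lemma l1_bound (u v : H) (s : Finset ℕ) : ∑ m ∈ s, ‖u m‖ * ‖v m‖ ≤ ‖u‖ * ‖v‖ := by
  have h2 := Finset.sum_mul_sq_le_sq_mul_sq s (fun m => ‖u m‖) (fun m => ‖v m‖)
  have hu : ∑ m ∈ s, ‖u m‖ ^ 2 ≤ ‖u‖ ^ 2 := by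
    have := lp.sum_rpow_le_norm_rpow (p := 2) (E := fun _ : ℕ => ℂ) (by norm_num) u s
    simpa only [ENNReal.toReal_ofNat, Real.rpow_two] using this
  have hv : ∑ m ∈ s, ‖v m‖ ^ 2 ≤ ‖v‖ ^ 2 := by
    have := lp.sum_rpow_le_norm_rpow (p := 2) (E := fun _ : ℕ => ℂ) (by norm_num) v s
    simpa only [ENNReal.toReal_ofNat, Real.rpow_two] using this
  have h0 : (0:ℝ) ≤ ∑ m ∈ s, ‖u m‖ * ‖v m‖ :=
    Finset.sum_nonneg fun m _ => mul_nonneg (norm_nonneg _) (norm_nonneg _)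
  have husq : (0:ℝ) ≤ ∑ m ∈ s, ‖u m‖ ^ 2 := Finset.sum_nonneg fun m _ => sq_nonneg _
  nlinarith [mul_nonneg (norm_nonneg u) (norm_nonneg v), norm_nonneg u, norm_nonneg v,
    sq_nonneg (‖u‖ - ‖v‖)]

lemma summable_l1 (u v : H) : Summable (fun m : ℕ => ‖u m‖ * ‖v m‖) :=
  summable_of_sum_le (fun m => mul_nonneg (norm_nonneg _) (norm_nonneg _)) (l1_bound u v)

lemma tsum_l1_le (u v : H) : ∑' m : ℕ, ‖u m‖ * ‖v m‖ ≤ ‖u‖ * ‖v‖ :=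
  Summable.tsum_le_of_sum_le (summable_l1 u v) (l1_bound u v)

lemma summable_norm_g (q : ℝ) (hq0 : 0 < q) (hq1 : q < 1) (a b : H →L[ℂ] H) :
    Summable (fun p : ℕ × ℕ =>
      ‖(q:ℂ)^p.1 * ((inner ℂ (e p.2) (b (e p.1)) : ℂ) * (inner ℂ (e p.1) (a (e p.2)) : ℂ))‖) := by
  have hrw : ∀ p : ℕ × ℕ,
      ‖(q:ℂ)^p.1 * ((inner ℂ (e p.2) (b (e p.1)) : ℂ) * (inner ℂ (e p.1) (a (e p.2)) : ℂ))‖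
      = q^p.1 * (‖(b (e p.1) : ∀ _ : ℕ, ℂ) p.2‖ *
          ‖((ContinuousLinearMap.adjoint a) (e p.1) : ∀ _ : ℕ, ℂ) p.2‖) := by
    rintro ⟨k, m⟩
    have h1 : (inner ℂ (e m) (b (e k)) : ℂ) = (b (e k) : ∀ _ : ℕ, ℂ) m := coord _ _
    have h2 : ‖((ContinuousLinearMap.adjoint a) (e k) : ∀ _ : ℕ, ℂ) m‖
        = ‖(inner ℂ (e k) (a (e m)) : ℂ)‖ := by
      rw [← coord ((ContinuousLinearMap.adjoint a) (e k)) m, ← inner_conj_symm, RCLike.norm_conj,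
        ContinuousLinearMap.adjoint_inner_left]
    simp only [norm_mul, norm_pow, h1, h2, Complex.norm_real, Real.norm_eq_abs, abs_of_pos hq0]
  refine (summable_congr hrw).mpr ?_
  rw [summable_prod_of_nonneg]
  · constructor
    · intro k
      dsimp only
      exact (summable_l1 (b (e k)) ((ContinuousLinearMap.adjoint a) (e k))).mul_left _
    · have hle : ∀ k : ℕ, (∑' m : ℕ, q^k * (‖(b (e k) : ∀ _ : ℕ, ℂ) m‖ *
          ‖((ContinuousLinearMap.adjoint a) (e k) : ∀ _ : ℕ, ℂ) m‖))
          ≤ q^k * (‖b‖ * ‖ContinuousLinearMap.adjoint a‖) := by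
        intro k
        rw [tsum_mul_left]
        refine mul_le_mul_of_nonneg_left ?_ (pow_nonneg hq0.le _)
        refine (tsum_l1_le _ _).trans ?_
        have hb := (b.le_opNorm (e k)).trans_eq (by rw [norm_e, mul_one])
        have ha := ((ContinuousLinearMap.adjoint a).le_opNorm (e k)).trans_eq
          (by rw [norm_e, mul_one])
        exact mul_le_mul hb ha (norm_nonneg _) (norm_nonneg _)
      dsimp only
      refine Summable.of_nonneg_of_le (fun k => tsum_nonneg fun m =>
        mul_nonneg (pow_nonneg hq0.le _) (mul_nonneg (norm_nonneg _) (norm_nonneg _))) hle ?_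
      exact (summable_geometric_of_lt_one hq0.le hq1).mul_right _
  · exact fun p => mul_nonneg (pow_nonneg hq0.le _) (mul_nonneg (norm_nonneg _) (norm_nonneg _))

lemma trace_swap (q : ℝ) (hq0 : 0 < q) (hq1 : q < 1) (j : H →L[ℂ] H)
    (hj : ∀ n : ℕ, j (e n) = ((q : ℂ) ^ n) • e n) (a b Jb : H →L[ℂ] H)
    (hb : b.comp j = j.comp Jb) :
    ∑' k : ℕ, (q:ℂ)^k * (inner ℂ (e k) ((a.comp b) (e k)) : ℂ)
      = ∑' k : ℕ, (q:ℂ)^k * (inner ℂ (e k) ((Jb.comp a) (e k)) : ℂ) := by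
  set f : ℕ → ℕ → ℂ := fun k m =>
    (q:ℂ)^k * ((inner ℂ (e m) (b (e k)) : ℂ) * (inner ℂ (e k) (a (e m)) : ℂ)) with hf
  set g : ℕ → ℕ → ℂ := fun k m =>
    (q:ℂ)^m * ((inner ℂ (e m) (Jb (e k)) : ℂ) * (inner ℂ (e k) (a (e m)) : ℂ)) with hg
  have hfg : ∀ k m, f k m = g k m := by
    intro k m
    rw [hf, hg]
    dsimp only
    rw [← mul_assoc, ← mul_assoc, entry_rel q j hj b Jb hb m k]
  have hsf : Summable (Function.uncurry f) :=
    (summable_norm_g q hq0 hq1 a b).of_norm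
  have hsg : Summable (Function.uncurry g) := by
    refine hsf.congr fun p => ?_
    exact hfg p.1 p.2
  have hL : ∀ k : ℕ, (q:ℂ)^k * (inner ℂ (e k) ((a.comp b) (e k)) : ℂ) = ∑' m : ℕ, f k m := by
    intro k
    rw [ContinuousLinearMap.comp_apply, inner_eq_tsum a (b (e k)) k, ← tsum_mul_left]
    refine tsum_congr fun m => ?_
    rw [hf]
    dsimp only
    rw [coord (b (e k)) m]
  have hR : ∀ m : ℕ, (q:ℂ)^m * (inner ℂ (e m) ((Jb.comp a) (e m)) : ℂ) = ∑' k : ℕ, g k m := by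
    intro m
    rw [ContinuousLinearMap.comp_apply, inner_eq_tsum Jb (a (e m)) m, ← tsum_mul_left]
    refine tsum_congr fun k => ?_
    rw [hg]
    dsimp only
    rw [coord (a (e m)) k]
    ring
  calc ∑' k : ℕ, (q:ℂ)^k * (inner ℂ (e k) ((a.comp b) (e k)) : ℂ)
      = ∑' (k : ℕ) (m : ℕ), f k m := tsum_congr hL
    _ = ∑' (k : ℕ) (m : ℕ), g k m := by
        exact tsum_congr fun k => tsum_congr fun m => hfg k m
    _ = ∑' (m : ℕ) (k : ℕ), g k m :=
        (Summable.tsum_comm' hsg (fun k => hsg.prod_factor k) (fun m => hsg.prod_symm.prod_factor m)).symm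
    _ = ∑' k : ℕ, (q:ℂ)^k * (inner ℂ (e k) ((Jb.comp a) (e k)) : ℂ) := by
        exact tsum_congr fun m => (hR m).symm

lemma summable_diag (q : ℝ) (hq0 : 0 < q) (hq1 : q < 1) (a : H →L[ℂ] H) :
    Summable (fun k : ℕ => (q:ℂ)^k * (inner ℂ (e k) (a (e k)) : ℂ)) := by
  refine Summable.of_norm ?_
  have hle : ∀ k : ℕ, ‖(q:ℂ)^k * (inner ℂ (e k) (a (e k)) : ℂ)‖ ≤ q^k * ‖a‖ := by
    intro k
    rw [norm_mul, norm_pow, Complex.norm_real, Real.norm_eq_abs, abs_of_pos hq0]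
    refine mul_le_mul_of_nonneg_left ?_ (pow_nonneg hq0.le _)
    refine (norm_inner_le_norm (e k) (a (e k))).trans ?_
    rw [norm_e, one_mul]
    exact (a.le_opNorm (e k)).trans_eq (by rw [norm_e, mul_one])
  refine Summable.of_nonneg_of_le (fun k => norm_nonneg _) hle ?_
  exact (summable_geometric_of_lt_one hq0.le hq1).mul_right _

lemma diag_re_nonneg (a : H →L[ℂ] H) (ha : a.IsPositive) (k : ℕ) :
    0 ≤ (inner ℂ (e k) (a (e k)) : ℂ).re := by
  have := ha.inner_nonneg_right (e k)
  exact (Complex.nonneg_iff.mp this).1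

lemma diag_im_zero (a : H →L[ℂ] H) (ha : a.IsPositive) (k : ℕ) :
    (inner ℂ (e k) (a (e k)) : ℂ).im = 0 := by
  have hsa : ContinuousLinearMap.adjoint a = a :=
    ContinuousLinearMap.isSelfAdjoint_iff'.mp ha.isSelfAdjoint
  have hc : (starRingEnd ℂ) (inner ℂ (e k) (a (e k)) : ℂ) = (inner ℂ (e k) (a (e k)) : ℂ) := by
    rw [inner_conj_symm]
    conv_lhs => rw [← hsa]
    rw [ContinuousLinearMap.adjoint_inner_left]
  exact Complex.conj_eq_iff_im.mp hc

lemma entries_conj (a : H →L[ℂ] H) (ha : a.IsPositive) (k m : ℕ) :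
    (inner ℂ (e m) (a (e k)) : ℂ) = (starRingEnd ℂ) (inner ℂ (e k) (a (e m)) : ℂ) := by
  have hsa : ContinuousLinearMap.adjoint a = a :=
    ContinuousLinearMap.isSelfAdjoint_iff'.mp ha.isSelfAdjoint
  rw [inner_conj_symm]
  conv_rhs => rw [← hsa]
  rw [ContinuousLinearMap.adjoint_inner_left]

lemma pos_diag_zero (a : H →L[ℂ] H) (ha : a.IsPositive)
    (hz : ∀ k : ℕ, (inner ℂ (e k) (a (e k)) : ℂ) = 0) : a = 0 := by
  have hE : ∀ k m : ℕ, (inner ℂ (e k) (a (e m)) : ℂ) = 0 := by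
    intro k m
    set E : ℂ := (inner ℂ (e k) (a (e m)) : ℂ) with hEdef
    have hexp : ∀ c : ℂ, (inner ℂ (e k + c • e m) (a (e k + c • e m)) : ℂ)
        = c * E + (starRingEnd ℂ) (c * E) := by
      intro c
      rw [map_add, a.map_smul, inner_add_left, inner_add_right, inner_add_right,
        inner_smul_left, inner_smul_right, inner_smul_left, inner_smul_right,
        hz k, hz m, entries_conj a ha k m, map_mul]
      ring
    have h4 : ∀ c : ℂ, 0 ≤ (c * E).re := by
      intro c
      have h := ha.inner_nonneg_right (e k + c • e m)
      rw [hexp c] at h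
      replace h := (Complex.nonneg_iff.mp h).1
      rw [Complex.add_re, Complex.conj_re] at h
      linarith
    have h1 := h4 1
    have h2 := h4 (-1)
    have h3 := h4 Complex.I
    have h5 := h4 (-Complex.I)
    simp only [one_mul, neg_mul, Complex.neg_re, Complex.mul_re, Complex.I_re, Complex.I_im,
      zero_mul, one_mul, zero_sub, neg_neg] at h1 h2 h3 h5
    apply Complex.ext
    · simp only [Complex.zero_re]; linarith
    · simp only [Complex.zero_im]; linarith
  have hek : ∀ k : ℕ, a (e k) = 0 := by
    intro k
    apply lp.ext
    funext m
    have := hE m k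
    rw [coord (a (e k)) m] at this
    simpa using this
  refine ContinuousLinearMap.ext fun x => ?_
  have h1 : HasSum (fun m : ℕ => lp.single 2 m (x m)) x := lp.hasSum_single (by norm_num) x
  have h2 : HasSum (fun m : ℕ => (x m : ℂ) • a (e m)) (a x) := by
    have := h1.mapL a
    simpa [single_eq_smul, _root_.map_smul] using this
  have h3 : HasSum (fun _ : ℕ => (0 : H)) (a x) := by
    refine h2.congr_fun ?_
    intro m
    rw [hek m, smul_zero]
  simpa using h3.unique hasSum_zero

/-- The integral `∫_{D_q} a = (1−q) Σ_k q^k ⟨e_k, a e_k⟩`. -/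
noncomputable def intDq (q : ℝ) (a : H →L[ℂ] H) : ℂ :=
  ((1 - q : ℝ) : ℂ) * ∑' k : ℕ, ((q : ℂ) ^ k) * (inner ℂ (e k) (a (e k)) : ℂ)

/-- `∫_{D_q}` is a faithful state: `∫ 1 = 1`, positive operators have nonnegative (real)
integral, vanishing only for the zero operator; moreover `∫ ab = ∫ J(b)a` for scalable `b`
and `∫ J(a) = ∫ a` for scalable `a`. -/
theorem stmt10 (q : ℝ) (hq0 : 0 < q) (hq1 : q < 1)
    (j : H →L[ℂ] H)
    (hj : ∀ n : ℕ, j (e n) = ((q : ℂ) ^ n) • e n) :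
    intDq q 1 = 1 ∧
    (∀ a : H →L[ℂ] H, a.IsPositive →
      (0 ≤ (intDq q a).re ∧ (intDq q a).im = 0) ∧ (intDq q a = 0 → a = 0)) ∧
    (∀ a b Jb : H →L[ℂ] H, b.comp j = j.comp Jb →
      intDq q (a.comp b) = intDq q (Jb.comp a)) ∧
    (∀ a Ja : H →L[ℂ] H, a.comp j = j.comp Ja → intDq q Ja = intDq q a) := by
  have hq1' : (1 : ℂ) - (q : ℂ) ≠ 0 := by
    intro h
    have : (q : ℂ) = 1 := by linear_combination -h
    exact absurd (by exact_mod_cast this) hq1.ne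
  refine ⟨?_, ?_, ?_, ?_⟩
  · -- state property: ∫ 1 = 1
    rw [intDq]
    have h : ∀ k : ℕ, (q:ℂ)^k * (inner ℂ (e k) ((1 : H →L[ℂ] H) (e k)) : ℂ) = (q:ℂ)^k := by
      intro k
      rw [ContinuousLinearMap.one_apply]
      have := inner_e k k
      rw [this]
      norm_num
    rw [tsum_congr h, tsum_geometric_of_norm_lt_one (by
      rw [Complex.norm_real, Real.norm_eq_abs, abs_of_pos hq0]; exact hq1)]
    rw [Complex.ofReal_sub, Complex.ofReal_one]
    field_simp
  · -- positivity and faithfulness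
    intro a ha
    have hsum := summable_diag q hq0 hq1 a
    set u : ℕ → ℝ := fun k => q^k * (inner ℂ (e k) (a (e k)) : ℂ).re with hu_def
    have hterm : ∀ k : ℕ, (q:ℂ)^k * (inner ℂ (e k) (a (e k)) : ℂ) = ((u k : ℝ) : ℂ) := by
      intro k
      have him := diag_im_zero a ha k
      rw [hu_def]
      apply Complex.ext
      · simp [Complex.mul_re, ← Complex.ofReal_pow, him]
      · simp [Complex.mul_im, ← Complex.ofReal_pow, him]
    have hu_nonneg : ∀ k, 0 ≤ u k := fun k =>
      mul_nonneg (pow_nonneg hq0.le _) (diag_re_nonneg a ha k)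
    have hu_sum : Summable u := by
      have h2 : Summable (fun k : ℕ => ((u k : ℝ) : ℂ)) := by
        refine hsum.congr fun k => hterm k
      have h3 := h2.map (Complex.reCLM : ℂ →L[ℝ] ℝ) Complex.reCLM.continuous
      refine h3.congr fun k => ?_
      simp
    have hkey : intDq q a = (((1 - q) * ∑' k, u k : ℝ) : ℂ) := by
      rw [intDq, tsum_congr hterm]
      have h5 : ∑' (b : ℕ), ((u b : ℝ) : ℂ) = ((∑' b, u b : ℝ) : ℂ) := by
        have := Complex.ofRealCLM.map_tsum hu_sum
        simpa using this.symm
      rw [h5]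
      push_cast
      ring
    refine ⟨⟨?_, ?_⟩, ?_⟩
    · rw [hkey, Complex.ofReal_re]
      exact mul_nonneg (by linarith) (tsum_nonneg hu_nonneg)
    · rw [hkey, Complex.ofReal_im]
    · intro h0
      rw [hkey] at h0
      have h1 := Complex.ofReal_eq_zero.mp h0
      have hT : ∑' k, u k = 0 := by
        rcases mul_eq_zero.mp h1 with h | h
        · exact absurd h (by linarith)
        · exact h
      have hk : ∀ k, u k = 0 := by
        intro k
        have hle := Summable.le_tsum hu_sum k (fun j _ => hu_nonneg j)
        rw [hT] at hle
        exact le_antisymm hle (hu_nonneg k)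
      refine pos_diag_zero a ha fun k => ?_
      have hre : (inner ℂ (e k) (a (e k)) : ℂ).re = 0 := by
        have := hk k
        rw [hu_def] at this
        have hq : (0:ℝ) < q^k := pow_pos hq0 _
        simp only at this
        nlinarith [this]
      apply Complex.ext
      · simpa using hre
      · simpa using diag_im_zero a ha k
  · intro a b Jb hb
    rw [intDq, intDq, trace_swap q hq0 hq1 j hj a b Jb hb]
  · intro a Ja hJ
    rw [intDq, intDq]
    congr 1
    refine tsum_congr fun k => ?_
    have h := entry_rel q j hj a Ja hJ k k
    have hqk : ((q:ℂ))^k ≠ 0 := pow_ne_zero _ (by exact_mod_cast hq0.ne')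
    rw [mul_left_cancel₀ hqk h.symm]
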